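/- Let m ∈ (1/2)ℤ_{>0} with m ∉ ℤ, let s ∈ (1/2)ℤ, and let a, b ∈ ℤ have different parity. Then for every τ with Im τ > 0 and all z₁, z₂ ∈ ℂ with z₁ ∉ ℤ + ℤτ one has Φ̃^{±[m;s]}(τ, z₁ + aτ, z₂ + bτ) = (±1)^a e^{−2πi m (b z₁ + a z₂)} q^{−mab} Φ̃^{±[m;s+1/2]}(τ, z₁, z₂), and Φ̃^{±[m;s]}(τ, z₁ + a, z₂ + b) = e^{2πi s a} Φ̃^{∓[m;s]}(τ, z₁, z₂). -/

import Mathlib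

noncomputable section

open Complex

/-- `mexp w = e^{2πi w}`. -/
def mexp (w : ℂ) : ℂ := Complex.exp (2 * (Real.pi : ℂ) * Complex.I * w)

/-- The signed mock theta function `Φ^{sgn[m;s]}(τ,z₁,z₂)`. -/
def PhiS (sgn : ℂ) (m s : ℝ) (τ z₁ z₂ : ℂ) : ℂ :=
  ∑' n : ℤ, sgn ^ n *
    mexp ((m : ℂ) * n * (z₁ + z₂) + (s : ℂ) * z₁ + τ * ((m : ℂ) * n ^ 2 + (s : ℂ) * n)) /
    (1 - mexp (z₁ + n * τ))

/-- The signed theta function `Θ^{sgn}_{j,m}(τ,z)`. -/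
def ThetaS (sgn : ℂ) (j m : ℝ) (τ z : ℂ) : ℂ :=
  ∑' n : ℤ, sgn ^ n *
    mexp ((m : ℂ) * z * ((n : ℂ) + ((j / (2 * m) : ℝ) : ℂ)) +
      τ * (m : ℂ) * ((n : ℂ) + ((j / (2 * m) : ℝ) : ℂ)) ^ 2)

/-- `E(x) = 2∫₀ˣ e^{-πu²} du`. -/
def Efun (x : ℝ) : ℝ := 2 * ∫ u in (0:ℝ)..x, Real.exp (-Real.pi * u ^ 2)

/-- `ψ_{m,n}(τ,z) = (n - 2m Im z / Im τ) √(Im τ / m)`. -/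
def psiMN (m n : ℝ) (τ z : ℂ) : ℝ := (n - 2 * m * z.im / τ.im) * Real.sqrt (τ.im / m)

/-- The real-analytic correction `R^{sgn}_{j,m}(τ,z)`; the summation variable `n ∈ j + 2mℤ`
is written as `n = j + 2mk`, `k ∈ ℤ`, so that `(±1)^{(n-j)/(2m)} = sgn^k`. -/
def RS (sgn : ℂ) (j m : ℝ) (τ z : ℂ) : ℂ :=
  ∑' k : ℤ, sgn ^ k *
    (((Real.sign (j + 2 * m * k - 1 / 2 - j + 2 * m) -
        Efun (psiMN m (j + 2 * m * k) τ z) : ℝ)) : ℂ) *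
    Complex.exp (-(Real.pi : ℂ) * Complex.I * (((j + 2 * m * k : ℝ)) : ℂ) ^ 2 * τ / (2 * (m : ℂ))
      + 2 * (Real.pi : ℂ) * Complex.I * (((j + 2 * m * k : ℝ)) : ℂ) * z)

/-- The modifier `Φ^{sgn[m;s]}_add`; the summation variable `j ∈ s + ℤ`, `s ≤ j < s + 2m`
is written as `j = s + i`, `0 ≤ i < ⌈2m⌉`. -/
def PhiAddS (sgn : ℂ) (m s : ℝ) (τ z₁ z₂ : ℂ) : ℂ :=
  ∑ i ∈ Finset.range ⌈2 * m⌉₊,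
    RS sgn (s + i) m τ ((z₁ - z₂) / 2) * ThetaS sgn (s + i) m τ (z₁ + z₂)

/-- The modified (signed) mock theta function `Φ̃^{sgn[m;s]}`. -/
def PhiTilde (sgn : ℂ) (m s : ℝ) (τ z₁ z₂ : ℂ) : ℂ :=
  PhiS sgn m s τ z₁ z₂ - (1 / 2) * PhiAddS sgn m s τ z₁ z₂

end

noncomputable section
open Complex MeasureTheory

lemma mexp_add (x y : ℂ) : mexp (x + y) = mexp x * mexp y := by
  rw [mexp, mexp, mexp, ← Complex.exp_add]; ring_nf

lemma mexp_ne_zero (x : ℂ) : mexp x ≠ 0 := Complex.exp_ne_zero _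

lemma mexp_zpow (x : ℂ) (n : ℤ) : mexp x ^ n = mexp ((n : ℂ) * x) := by
  rw [mexp, mexp, ← Complex.exp_int_mul]; ring_nf

lemma mexp_intCast (n : ℤ) : mexp (n : ℂ) = 1 := by
  rw [mexp, Complex.exp_eq_one_iff]; exact ⟨n, by ring⟩

lemma mexp_half : mexp (1 / 2) = -1 := by
  rw [mexp, show (2 * (Real.pi : ℂ) * Complex.I * (1/2)) = Real.pi * Complex.I by ring]
  exact Complex.exp_pi_mul_I

lemma mexp_int_half (n : ℤ) : mexp ((n : ℂ) / 2) = (-1 : ℂ) ^ n := by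
  rw [show ((n : ℂ) / 2) = (n : ℂ) * (1/2) by ring, ← mexp_zpow, mexp_half]

lemma norm_mexp (w : ℂ) : ‖mexp w‖ = Real.exp (-(2 * Real.pi) * w.im) := by
  rw [mexp, Complex.norm_exp]
  congr 1
  simp [Complex.mul_re, Complex.mul_im]

lemma neg_one_zpow_congr {x y : ℤ} (h : x % 2 = y % 2) : (-1 : ℂ) ^ x = (-1 : ℂ) ^ y := by
  rcases Int.even_or_odd x with hx | hx
  · have hx2 := Int.even_iff.1 hx
    rw [hx.neg_one_zpow, (Int.even_iff.2 (by omega : y % 2 = 0)).neg_one_zpow]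
  · have hx2 := Int.odd_iff.1 hx
    rw [hx.neg_one_zpow, (Int.odd_iff.2 (by omega : y % 2 = 1)).neg_one_zpow]
  
lemma sgn_zpow_congr {sgn : ℂ} (hsgn : sgn = 1 ∨ sgn = -1) {x y : ℤ} (h : x % 2 = y % 2) :
    sgn ^ x = sgn ^ y := by
  rcases hsgn with h1 | h1 <;> subst h1
  · simp
  · exact neg_one_zpow_congr h

lemma sgn_ne_zero {sgn : ℂ} (hsgn : sgn = 1 ∨ sgn = -1) : sgn ≠ 0 := by
  rcases hsgn with h | h <;> subst h <;> norm_num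

lemma sgn_zpow_add {sgn : ℂ} (hsgn : sgn = 1 ∨ sgn = -1) (x y : ℤ) :
    sgn ^ (x + y) = sgn ^ x * sgn ^ y := zpow_add₀ (sgn_ne_zero hsgn) x y

lemma norm_sgn_zpow {sgn : ℂ} (hsgn : sgn = 1 ∨ sgn = -1) (n : ℤ) : ‖sgn ^ n‖ = 1 := by
  rcases hsgn with h | h <;> subst h
  · simp
  · rcases Int.even_or_odd n with h | h
    · rw [h.neg_one_zpow]; simp
    · rw [h.neg_one_zpow]; simp

lemma neg_one_zpow_odd_mul {c : ℤ} (hc : Odd c) (n : ℤ) : (-1 : ℂ) ^ (c * n) = (-1 : ℂ) ^ n := by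
  rcases Int.even_or_odd n with h | h
  · rw [(h.mul_left c).neg_one_zpow, h.neg_one_zpow]
  · rw [(hc.mul h).neg_one_zpow, h.neg_one_zpow]

lemma im_three (x y w : ℝ) (u v t : ℂ) :
    ((x : ℂ) * u + (y : ℂ) * v + (w : ℂ) * t).im = x * u.im + y * v.im + w * t.im := by
  simp [Complex.add_im, Complex.mul_im]

lemma re_two (x y : ℝ) (τ z : ℂ) :
    ((x : ℂ) * Complex.I * τ + (y : ℂ) * Complex.I * z).re = -(x * τ.im) - y * z.im := by
  simp [Complex.add_re, Complex.mul_re, Complex.mul_im]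
  ring

lemma summable_exp_quad_nat (c b d : ℝ) (hc : 0 < c) :
    Summable fun n : ℕ => Real.exp (-c * n ^ 2 + b * n + d) := by
  have hgeom : Summable fun n : ℕ => Real.exp ((b + 1) ^ 2 / (4 * c) + d) * Real.exp (-1) ^ n :=
    (summable_geometric_of_lt_one (Real.exp_pos _).le
      (Real.exp_lt_one_iff.2 (by norm_num))).mul_left _
  apply Summable.of_nonneg_of_le (fun n => (Real.exp_pos _).le) _ hgeom
  intro n
  rw [← Real.exp_nat_mul, ← Real.exp_add]
  apply Real.exp_le_exp.2
  have hK : (b + 1) ^ 2 / (4 * c) * (4 * c) = (b + 1) ^ 2 :=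
    div_mul_cancel₀ _ (by positivity)
  nlinarith [sq_nonneg (2 * c * (n : ℝ) - (b + 1)), hc, hK]

lemma summable_exp_quad (c b d : ℝ) (hc : 0 < c) :
    Summable fun n : ℤ => Real.exp (-c * n ^ 2 + b * n + d) := by
  apply Summable.of_nat_of_neg_add_one
  · exact (summable_exp_quad_nat c b d hc).congr (by intro n; push_cast; ring_nf)
  · apply Summable.of_nonneg_of_le (fun n => (Real.exp_pos _).le) _
      (summable_exp_quad_nat c (-b) (d - b) hc)
    intro n
    apply Real.exp_le_exp.2
    push_cast
    nlinarith [hc, Nat.cast_nonneg (α := ℝ) n]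

lemma gauss_integrable : Integrable (fun u : ℝ => Real.exp (-Real.pi * u ^ 2)) :=
  integrable_exp_neg_mul_sq Real.pi_pos

lemma gauss_total : ∫ u : ℝ, Real.exp (-Real.pi * u ^ 2) = 1 := by
  rw [integral_gaussian, div_self Real.pi_ne_zero, Real.sqrt_one]

lemma gauss_Ioi : ∫ u in Set.Ioi (0 : ℝ), Real.exp (-Real.pi * u ^ 2) = 1 / 2 := by
  rw [integral_gaussian_Ioi, div_self Real.pi_ne_zero, Real.sqrt_one]


lemma Efun_interval (x : ℝ) (hx : 0 ≤ x) :
    Efun x = 2 * ∫ u in Set.Ioc (0:ℝ) x, Real.exp (-Real.pi * u ^ 2) := by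
  rw [Efun, intervalIntegral.integral_of_le hx]

lemma Efun_le_one (x : ℝ) (hx : 0 ≤ x) : Efun x ≤ 1 := by
  rw [Efun_interval x hx]
  have h1 : ∫ u in Set.Ioc (0:ℝ) x, Real.exp (-Real.pi * u ^ 2)
      ≤ ∫ u in Set.Ioi (0:ℝ), Real.exp (-Real.pi * u ^ 2) := by
    apply setIntegral_mono_set gauss_integrable.integrableOn
    · filter_upwards with u using (Real.exp_pos _).le
    · exact Filter.Eventually.of_forall (fun u hu => hu.1)
  rw [gauss_Ioi] at h1
  linarith

lemma Efun_nonneg (x : ℝ) (hx : 0 ≤ x) : 0 ≤ Efun x := by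
  rw [Efun]
  have : 0 ≤ ∫ u in (0:ℝ)..x, Real.exp (-Real.pi * u ^ 2) :=
    intervalIntegral.integral_nonneg hx (fun u _ => (Real.exp_pos _).le)
  linarith

lemma Efun_tail (x : ℝ) (hx : 0 ≤ x) :
    1 - Efun x = 2 * ∫ u in Set.Ioi x, Real.exp (-Real.pi * u ^ 2) := by
  have hsplit : (∫ u in Set.Ioc (0:ℝ) x, Real.exp (-Real.pi * u ^ 2))
      + ∫ u in Set.Ioi x, Real.exp (-Real.pi * u ^ 2)
      = ∫ u in Set.Ioi (0:ℝ), Real.exp (-Real.pi * u ^ 2) := by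
    rw [← setIntegral_union (Set.Ioc_disjoint_Ioi le_rfl) measurableSet_Ioi
      gauss_integrable.integrableOn gauss_integrable.integrableOn,
      Set.Ioc_union_Ioi_eq_Ioi hx]
  rw [Efun_interval x hx]
  rw [gauss_Ioi] at hsplit
  linarith

lemma gauss_shift_integrable (x : ℝ) :
    Integrable (fun u : ℝ => Real.exp (-Real.pi * x ^ 2 - Real.pi * (u - x) ^ 2)) := by
  have h1 : Integrable (fun u : ℝ => Real.exp (-Real.pi * (u - x) ^ 2)) :=
    gauss_integrable.comp_sub_right x
  have h2 := h1.const_mul (Real.exp (-Real.pi * x ^ 2))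
  have h3 : (fun u : ℝ => Real.exp (-Real.pi * x ^ 2) * Real.exp (-Real.pi * (u - x) ^ 2))
      = fun u : ℝ => Real.exp (-Real.pi * x ^ 2 - Real.pi * (u - x) ^ 2) := by
    funext u; rw [← Real.exp_add]; ring_nf
  rw [h3] at h2
  exact h2

lemma Efun_tail_le (x : ℝ) (hx : 0 ≤ x) :
    1 - Efun x ≤ 2 * Real.exp (-Real.pi * x ^ 2) := by
  rw [Efun_tail x hx]
  have h1 : ∫ u in Set.Ioi x, Real.exp (-Real.pi * u ^ 2)
      ≤ ∫ u in Set.Ioi x, Real.exp (-Real.pi * x ^ 2 - Real.pi * (u - x) ^ 2) := by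
    apply setIntegral_mono_on gauss_integrable.integrableOn
      (gauss_shift_integrable x).integrableOn measurableSet_Ioi
    intro u hu
    apply Real.exp_le_exp.2
    have hxu : x ≤ u := le_of_lt hu
    nlinarith [Real.pi_pos, mul_nonneg hx (sub_nonneg.2 hxu)]
  have h2 : ∫ u in Set.Ioi x, Real.exp (-Real.pi * x ^ 2 - Real.pi * (u - x) ^ 2)
      ≤ ∫ u : ℝ, Real.exp (-Real.pi * x ^ 2 - Real.pi * (u - x) ^ 2) := by
    apply setIntegral_le_integral (gauss_shift_integrable x)
    filter_upwards with u using (Real.exp_pos _).le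
  have h3 : ∫ u : ℝ, Real.exp (-Real.pi * x ^ 2 - Real.pi * (u - x) ^ 2)
      = Real.exp (-Real.pi * x ^ 2) := by
    have : (fun u : ℝ => Real.exp (-Real.pi * x ^ 2 - Real.pi * (u - x) ^ 2))
        = fun u : ℝ => Real.exp (-Real.pi * x ^ 2) * Real.exp (-Real.pi * (u - x) ^ 2) := by
      funext u; rw [← Real.exp_add]; ring_nf
    rw [this, integral_const_mul]
    have h4 : ∫ u : ℝ, Real.exp (-Real.pi * (u - x) ^ 2)
        = ∫ u : ℝ, Real.exp (-Real.pi * u ^ 2) := by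
      exact integral_sub_right_eq_self (fun u => Real.exp (-Real.pi * u ^ 2)) x
    rw [h4, gauss_total, mul_one]
  linarith

lemma Efun_neg (x : ℝ) : Efun (-x) = - Efun x := by
  rw [Efun, Efun]
  have h1 : (∫ u in (0:ℝ)..(-x), Real.exp (-Real.pi * u ^ 2))
      = - ∫ u in (-x)..(0:ℝ), Real.exp (-Real.pi * u ^ 2) :=
    (intervalIntegral.integral_symm _ _)
  have h2 : (∫ u in (-x)..(0:ℝ), Real.exp (-Real.pi * u ^ 2))
      = ∫ u in (0:ℝ)..x, Real.exp (-Real.pi * u ^ 2) := by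
    have := intervalIntegral.integral_comp_neg (a := (0:ℝ)) (b := x)
      (fun u => Real.exp (-Real.pi * u ^ 2))
    simp only [neg_zero] at this
    rw [← this]
    congr 1; funext u; ring_nf
  rw [h1, h2]; ring

lemma abs_sign_sub_Efun {σ ψ : ℝ} (h : (0 ≤ ψ ∧ σ = 1) ∨ (ψ ≤ 0 ∧ σ = -1)) :
    |σ - Efun ψ| ≤ 2 * Real.exp (-Real.pi * ψ ^ 2) := by
  rcases h with ⟨hψ, hσ⟩ | ⟨hψ, hσ⟩
  · subst hσ
    rw [_root_.abs_of_nonneg (by linarith [Efun_le_one ψ hψ])]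
    exact Efun_tail_le ψ hψ
  · subst hσ
    have hψ' : 0 ≤ -ψ := by linarith
    rw [show (-1 : ℝ) - Efun ψ = -(1 - Efun (-ψ)) by rw [Efun_neg]; ring, abs_neg,
      _root_.abs_of_nonneg (by linarith [Efun_le_one (-ψ) hψ'])]
    calc 1 - Efun (-ψ) ≤ 2 * Real.exp (-Real.pi * (-ψ) ^ 2) := Efun_tail_le (-ψ) hψ'
      _ = 2 * Real.exp (-Real.pi * ψ ^ 2) := by ring_nf

end

noncomputable section
open Complex MeasureTheory

lemma summable_theta_term {sgn : ℂ} (hsgn : sgn = 1 ∨ sgn = -1) (j m : ℝ) (hm : 0 < m)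
    {τ : ℂ} (hτ : 0 < τ.im) (z : ℂ) :
    Summable fun n : ℤ => sgn ^ n *
      mexp ((m : ℂ) * z * ((n : ℂ) + ((j / (2 * m) : ℝ) : ℂ)) +
        τ * (m : ℂ) * ((n : ℂ) + ((j / (2 * m) : ℝ) : ℂ)) ^ 2) := by
  apply Summable.of_norm_bounded (g := fun n : ℤ => Real.exp (-(2 * Real.pi * m * τ.im) * n ^ 2
      + (-(2 * Real.pi) * (m * z.im + τ.im * j)) * n
      + (-(2 * Real.pi) * (z.im * j / 2 + τ.im * j ^ 2 / (4 * m)))))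
    (summable_exp_quad _ _ _ (by positivity))
  intro n
  rw [norm_mul, norm_sgn_zpow hsgn, one_mul, norm_mexp]
  apply le_of_eq
  have harg : (m : ℂ) * z * ((n : ℂ) + ((j / (2 * m) : ℝ) : ℂ)) +
        τ * (m : ℂ) * ((n : ℂ) + ((j / (2 * m) : ℝ) : ℂ)) ^ 2
      = ((m * (n + j / (2 * m)) : ℝ) : ℂ) * z
        + ((m * (n + j / (2 * m)) ^ 2 : ℝ) : ℂ) * τ + ((0 : ℝ) : ℂ) * 0 := by
    push_cast; ring
  rw [harg, im_three]
  congr 1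
  have hm' : m ≠ 0 := ne_of_gt hm
  field_simp
  ring

lemma summable_phi_term {sgn : ℂ} (hsgn : sgn = 1 ∨ sgn = -1) (m s : ℝ) (hm : 0 < m)
    {τ : ℂ} (hτ : 0 < τ.im) (z₁ z₂ : ℂ) :
    Summable fun n : ℤ => sgn ^ n *
      mexp ((m : ℂ) * n * (z₁ + z₂) + (s : ℂ) * z₁ + τ * ((m : ℂ) * n ^ 2 + (s : ℂ) * n)) /
      (1 - mexp (z₁ + n * τ)) := by
  set c : ℝ := 2 * Real.pi * m * τ.im with hc
  set b₁ : ℝ := -(2 * Real.pi) * (m * (z₁.im + z₂.im) + s * τ.im) with hb₁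
  set d₁ : ℝ := -(2 * Real.pi) * (s * z₁.im) with hd₁
  have hcpos : 0 < c := by rw [hc]; positivity
  have hnum : ∀ n : ℤ, ‖sgn ^ n *
      mexp ((m : ℂ) * n * (z₁ + z₂) + (s : ℂ) * z₁ + τ * ((m : ℂ) * n ^ 2 + (s : ℂ) * n))‖
      = Real.exp (-c * n ^ 2 + b₁ * n + d₁) := by
    intro n
    rw [norm_mul, norm_sgn_zpow hsgn, one_mul, norm_mexp]
    have harg : (m : ℂ) * n * (z₁ + z₂) + (s : ℂ) * z₁ + τ * ((m : ℂ) * n ^ 2 + (s : ℂ) * n)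
        = ((m * n : ℝ) : ℂ) * (z₁ + z₂) + ((s : ℝ) : ℂ) * z₁
          + ((m * n ^ 2 + s * n : ℝ) : ℂ) * τ := by
      push_cast; ring
    rw [harg, im_three]
    congr 1
    simp only [Complex.add_im, hc, hb₁, hd₁]
    ring
  have hW : ∀ n : ℤ, ‖mexp (z₁ + n * τ)‖ = Real.exp (-(2 * Real.pi) * (z₁.im + n * τ.im)) := by
    intro n
    rw [norm_mexp]
    congr 2
    have : z₁ + (n : ℂ) * τ = ((1 : ℝ) : ℂ) * z₁ + (((n : ℝ)) : ℂ) * τ + ((0 : ℝ) : ℂ) * 0 := by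
      push_cast; ring
    rw [this, im_three]
    ring
  apply Summable.of_norm_bounded_eventually (g := fun n : ℤ => 2 * Real.exp (-c * n ^ 2 + b₁ * n + d₁)
      + 2 * Real.exp (-c * n ^ 2 + (b₁ + 2 * Real.pi * τ.im) * n + (d₁ + 2 * Real.pi * z₁.im)))
    (((summable_exp_quad _ _ _ hcpos).mul_left 2).add
      ((summable_exp_quad _ _ _ hcpos).mul_left 2))
  rw [Filter.eventually_cofinite]
  have hmain : ∀ n : ℤ, (‖mexp (z₁ + n * τ)‖ ≤ 1 / 2 ∨ 2 ≤ ‖mexp (z₁ + n * τ)‖) →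
      ‖sgn ^ n *
        mexp ((m : ℂ) * n * (z₁ + z₂) + (s : ℂ) * z₁ + τ * ((m : ℂ) * n ^ 2 + (s : ℂ) * n)) /
        (1 - mexp (z₁ + n * τ))‖
      ≤ 2 * Real.exp (-c * n ^ 2 + b₁ * n + d₁)
        + 2 * Real.exp (-c * n ^ 2 + (b₁ + 2 * Real.pi * τ.im) * n + (d₁ + 2 * Real.pi * z₁.im)) := by
    intro n hcase
    rw [norm_div, hnum n]
    rcases hcase with hle | hge
    · have hden : (1 : ℝ) / 2 ≤ ‖1 - mexp (z₁ + n * τ)‖ := by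
        have := norm_sub_norm_le (1 : ℂ) (mexp (z₁ + n * τ))
        simp only [norm_one] at this
        linarith
      have h1 : Real.exp (-c * n ^ 2 + b₁ * n + d₁) / ‖1 - mexp (z₁ + n * τ)‖
          ≤ 2 * Real.exp (-c * n ^ 2 + b₁ * n + d₁) := by
        rw [div_le_iff₀ (by linarith)]
        nlinarith [Real.exp_pos (-c * n ^ 2 + b₁ * n + d₁)]
      have h2 : (0:ℝ) ≤ 2 * Real.exp (-c * n ^ 2 + (b₁ + 2 * Real.pi * τ.im) * n + (d₁ + 2 * Real.pi * z₁.im)) :=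
        by positivity
      linarith
    · have hWpos : (0:ℝ) < ‖mexp (z₁ + n * τ)‖ := by
        rw [hW n]; exact Real.exp_pos _
      have hden : ‖mexp (z₁ + n * τ)‖ / 2 ≤ ‖1 - mexp (z₁ + n * τ)‖ := by
        have h3 : ‖mexp (z₁ + n * τ)‖ - ‖(1:ℂ)‖ ≤ ‖1 - mexp (z₁ + n * τ)‖ := by
          rw [norm_sub_rev]
          exact norm_sub_norm_le _ _
        simp only [norm_one] at h3
        linarith
      have hdenpos : (0:ℝ) < ‖1 - mexp (z₁ + n * τ)‖ := by linarith
      have h1 : Real.exp (-c * n ^ 2 + b₁ * n + d₁) / ‖1 - mexp (z₁ + n * τ)‖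
          ≤ 2 * Real.exp (-c * n ^ 2 + b₁ * n + d₁) / ‖mexp (z₁ + n * τ)‖ := by
        rw [div_le_div_iff₀ hdenpos hWpos]
        nlinarith [Real.exp_pos (-c * n ^ 2 + b₁ * n + d₁)]
      have h2 : 2 * Real.exp (-c * n ^ 2 + b₁ * n + d₁) / ‖mexp (z₁ + n * τ)‖
          = 2 * Real.exp (-c * n ^ 2 + (b₁ + 2 * Real.pi * τ.im) * n + (d₁ + 2 * Real.pi * z₁.im)) := by
        rw [hW n, mul_div_assoc, ← Real.exp_sub]
        congr 2
        ring
      have h3 : (0:ℝ) ≤ 2 * Real.exp (-c * n ^ 2 + b₁ * n + d₁) := by positivity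
      linarith
  apply Set.Finite.subset (Set.finite_Icc (⌈(-1 - z₁.im) / τ.im⌉) (⌊(1 - z₁.im) / τ.im⌋))
  intro n hn
  simp only [Set.mem_setOf_eq] at hn
  by_contra hIcc
  apply hn
  apply hmain
  simp only [Set.mem_Icc, not_and_or, not_le] at hIcc
  have he : ‖mexp (z₁ + n * τ)‖ = Real.exp (-(2 * Real.pi) * (z₁.im + n * τ.im)) := hW n
  have hpi : (3 : ℝ) ≤ Real.pi := by
    have := Real.pi_gt_three
    linarith
  rcases hIcc with hlt | hgt
  · -- n < ⌈(-1 - z₁.im)/τ.im⌉, so (n:ℝ) < (-1 - z₁.im)/τ.im, so z₁.im + n τ.im < -1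
    right
    have h4 : (n : ℝ) < (-1 - z₁.im) / τ.im := by
      have := Int.lt_ceil.1 (by omega : n < ⌈(-1 - z₁.im) / τ.im⌉)
      exact this
    have h5 : (n : ℝ) * τ.im < -1 - z₁.im := by
      rw [lt_div_iff₀ hτ] at h4
      linarith
    rw [he]
    have h6 : (1 : ℝ) ≤ -(2 * Real.pi) * (z₁.im + n * τ.im) := by nlinarith
    calc (2:ℝ) ≤ Real.exp 1 := by
          have := Real.add_one_le_exp 1
          linarith
      _ ≤ _ := Real.exp_le_exp.2 h6
  · left
    have h4 : (1 - z₁.im) / τ.im < (n : ℝ) := by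
      exact_mod_cast Int.floor_lt.1 (by omega : ⌊(1 - z₁.im) / τ.im⌋ < n)
    have h5 : 1 - z₁.im < (n : ℝ) * τ.im := by
      rw [div_lt_iff₀ hτ] at h4
      linarith
    rw [he]
    have h6 : -(2 * Real.pi) * (z₁.im + n * τ.im) ≤ -1 := by nlinarith
    calc Real.exp (-(2 * Real.pi) * (z₁.im + (n:ℝ) * τ.im)) ≤ Real.exp (-1) :=
          Real.exp_le_exp.2 h6
      _ ≤ 1/2 := by
          rw [Real.exp_neg]
          rw [inv_le_comm₀ (Real.exp_pos 1) (by norm_num)]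
          have := Real.add_one_le_exp 1
          linarith
end


noncomputable section
open Complex MeasureTheory

lemma summable_RS_term {sgn : ℂ} (hsgn : sgn = 1 ∨ sgn = -1) (j m : ℝ) (hm : 1 ≤ 2 * m)
    {τ : ℂ} (hτ : 0 < τ.im) (z : ℂ) :
    Summable fun k : ℤ => sgn ^ k *
      (((Real.sign (j + 2 * m * k - 1 / 2 - j + 2 * m) -
          Efun (psiMN m (j + 2 * m * k) τ z) : ℝ)) : ℂ) *
      Complex.exp (-(Real.pi : ℂ) * Complex.I * (((j + 2 * m * k : ℝ)) : ℂ) ^ 2 * τ / (2 * (m : ℂ))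
        + 2 * (Real.pi : ℂ) * Complex.I * (((j + 2 * m * k : ℝ)) : ℂ) * z) := by
  have hm0 : (0:ℝ) < m := by linarith
  set I0 : ℝ := τ.im with hI0
  set y : ℝ := z.im with hy
  set β : ℝ := 2 * m * y / I0 with hβ
  set c : ℝ := 2 * Real.pi * m * I0 with hc
  set bb : ℝ := -2 * Real.pi * I0 * j + 4 * Real.pi * m * y with hbb
  set d : ℝ := -Real.pi * I0 * j ^ 2 / (2 * m) + 2 * Real.pi * y * j
      - 4 * Real.pi * m * y ^ 2 / I0 with hd
  have hcpos : 0 < c := by rw [hc]; positivity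
  apply Summable.of_norm_bounded_eventually (g := fun k : ℤ => 2 * Real.exp (-c * k ^ 2 + bb * k + d))
    ((summable_exp_quad _ _ _ hcpos).mul_left 2)
  rw [Filter.eventually_cofinite]
  have hre : ∀ k : ℤ, ‖Complex.exp (-(Real.pi : ℂ) * Complex.I * (((j + 2 * m * k : ℝ)) : ℂ) ^ 2 * τ / (2 * (m : ℂ))
        + 2 * (Real.pi : ℂ) * Complex.I * (((j + 2 * m * k : ℝ)) : ℂ) * z)‖
      = Real.exp (Real.pi * (j + 2 * m * k) ^ 2 / (2 * m) * I0 - 2 * Real.pi * (j + 2 * m * k) * y) := by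
    intro k
    rw [Complex.norm_exp]
    congr 1
    have harg : (-(Real.pi : ℂ) * Complex.I * (((j + 2 * m * k : ℝ)) : ℂ) ^ 2 * τ / (2 * (m : ℂ))
        + 2 * (Real.pi : ℂ) * Complex.I * (((j + 2 * m * k : ℝ)) : ℂ) * z)
        = ((-(Real.pi * (j + 2 * m * k) ^ 2 / (2 * m)) : ℝ) : ℂ) * Complex.I * τ
          + ((2 * Real.pi * (j + 2 * m * k) : ℝ) : ℂ) * Complex.I * z := by
      push_cast
      field_simp
    rw [harg, re_two]
    ring
  have hmain : ∀ k : ℤ, ((0 ≤ k ∧ β ≤ j + 2 * m * k) ∨ (k ≤ -1 ∧ j + 2 * m * k ≤ β)) →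
      ‖sgn ^ k *
      (((Real.sign (j + 2 * m * k - 1 / 2 - j + 2 * m) -
          Efun (psiMN m (j + 2 * m * k) τ z) : ℝ)) : ℂ) *
      Complex.exp (-(Real.pi : ℂ) * Complex.I * (((j + 2 * m * k : ℝ)) : ℂ) ^ 2 * τ / (2 * (m : ℂ))
        + 2 * (Real.pi : ℂ) * Complex.I * (((j + 2 * m * k : ℝ)) : ℂ) * z)‖
      ≤ 2 * Real.exp (-c * k ^ 2 + bb * k + d) := by
    intro k hk
    rw [norm_mul, norm_mul, norm_sgn_zpow hsgn, one_mul, hre k, Complex.norm_real,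
      Real.norm_eq_abs]
    set ψ : ℝ := psiMN m (j + 2 * m * k) τ z with hψ
    have hsqrtpos : 0 < Real.sqrt (I0 / m) := Real.sqrt_pos.2 (by positivity)
    have hψsq : ψ ^ 2 = (j + 2 * m * k - β) ^ 2 * (I0 / m) := by
      rw [hψ, psiMN, mul_pow, Real.sq_sqrt (by positivity : (0:ℝ) ≤ I0 / m)]
    have hsign : |Real.sign (j + 2 * m * k - 1 / 2 - j + 2 * m) -
        Efun (psiMN m (j + 2 * m * k) τ z)| ≤ 2 * Real.exp (-Real.pi * ψ ^ 2) := by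
      apply abs_sign_sub_Efun
      rcases hk with ⟨hk0, hkβ⟩ | ⟨hk0, hkβ⟩
      · left
        constructor
        · rw [psiMN]
          apply mul_nonneg _ (Real.sqrt_nonneg _)
          rw [hβ] at hkβ
          have : 2 * m * z.im / τ.im ≤ j + 2 * m * k := hkβ
          linarith [this]
        · apply Real.sign_of_pos
          have : (0:ℝ) ≤ k := by exact_mod_cast hk0
          nlinarith
      · right
        constructor
        · rw [psiMN]
          apply mul_nonpos_of_nonpos_of_nonneg _ (Real.sqrt_nonneg _)
          rw [hβ] at hkβ
          have : j + 2 * m * k ≤ 2 * m * z.im / τ.im := hkβ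
          linarith [this]
        · apply Real.sign_of_neg
          have : (k:ℝ) ≤ -1 := by exact_mod_cast hk0
          nlinarith
    calc |Real.sign (j + 2 * m * k - 1 / 2 - j + 2 * m) - Efun (psiMN m (j + 2 * m * k) τ z)|
          * Real.exp (Real.pi * (j + 2 * m * k) ^ 2 / (2 * m) * I0 - 2 * Real.pi * (j + 2 * m * k) * y)
        ≤ 2 * Real.exp (-Real.pi * ψ ^ 2)
          * Real.exp (Real.pi * (j + 2 * m * k) ^ 2 / (2 * m) * I0 - 2 * Real.pi * (j + 2 * m * k) * y) := by
          apply mul_le_mul_of_nonneg_right hsign (Real.exp_pos _).le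
      _ = 2 * Real.exp (-Real.pi * ψ ^ 2
            + (Real.pi * (j + 2 * m * k) ^ 2 / (2 * m) * I0 - 2 * Real.pi * (j + 2 * m * k) * y)) := by
          rw [mul_assoc, ← Real.exp_add]
      _ ≤ 2 * Real.exp (-c * k ^ 2 + bb * k + d) := by
          apply mul_le_mul_of_nonneg_left _ (by norm_num)
          apply Real.exp_le_exp.2
          apply le_of_eq
          rw [hψsq, hc, hbb, hd, hβ]
          have hI0' : I0 ≠ 0 := ne_of_gt hτ
          have hm' : m ≠ 0 := ne_of_gt hm0
          field_simp
          ring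
  apply Set.Finite.subset
    (Set.finite_Icc (min (-1) (⌊(β - j) / (2 * m)⌋ - 1)) (max 0 (⌈(β - j) / (2 * m)⌉ + 1)))
  intro k hk
  simp only [Set.mem_setOf_eq] at hk
  by_contra hIcc
  apply hk
  apply hmain
  simp only [Set.mem_Icc, not_and_or, not_le] at hIcc
  rcases hIcc with hlt | hgt
  · right
    have h1 : k ≤ -1 := by
      have := lt_min_iff.1 hlt
      omega
    have h2 : k ≤ ⌊(β - j) / (2 * m)⌋ - 1 := by
      have := lt_min_iff.1 hlt
      omega
    refine ⟨h1, ?_⟩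
    have h3 : (k : ℝ) ≤ (β - j) / (2 * m) := by
      have : (k : ℝ) ≤ (⌊(β - j) / (2 * m)⌋ : ℝ) - 1 := by exact_mod_cast h2
      have h4 := Int.sub_one_lt_floor ((β - j) / (2 * m))
      linarith [Int.floor_le ((β - j) / (2 * m))]
    rw [le_div_iff₀ (by linarith : (0:ℝ) < 2 * m)] at h3
    linarith
  · left
    have h1 : 0 ≤ k := by
      have := max_lt_iff.1 hgt
      omega
    have h2 : ⌈(β - j) / (2 * m)⌉ + 1 ≤ k := by
      have := max_lt_iff.1 hgt
      omega
    refine ⟨h1, ?_⟩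
    have h3 : (β - j) / (2 * m) ≤ (k : ℝ) := by
      have : ((⌈(β - j) / (2 * m)⌉ : ℝ) + 1) ≤ (k : ℝ) := by exact_mod_cast h2
      linarith [Int.le_ceil ((β - j) / (2 * m))]
    rw [div_le_iff₀ (by linarith : (0:ℝ) < 2 * m)] at h3
    linarith
end


noncomputable section
open Complex MeasureTheory

/-- helper: combine scalar × mexp products -/
lemma mexp_combine (s P A B : ℂ) (h : B = P + A) :
    s * mexp B = mexp P * (s * mexp A) := by
  rw [h, mexp_add]; ring

lemma exp_combine (s c P A B : ℂ) (h : B = P + A) :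
    s * c * Complex.exp B = Complex.exp P * (s * c * Complex.exp A) := by
  rw [h, Complex.exp_add]; ring

lemma theta_tau_shift (sgn : ℂ) (j m u : ℝ) (hm : m ≠ 0) (τ z : ℂ) :
    ThetaS sgn j m τ (z + (u : ℂ) * τ)
      = mexp (-(τ * ((m * u ^ 2 / 4 : ℝ) : ℂ)) - ((m * u / 2 : ℝ) : ℂ) * z) *
        ThetaS sgn (j + m * u) m τ z := by
  rw [ThetaS, ThetaS, ← tsum_mul_left]
  apply tsum_congr
  intro n
  apply mexp_combine
  have hmc : (m : ℂ) ≠ 0 := Complex.ofReal_ne_zero.2 hm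
  push_cast
  field_simp
  ring

lemma theta_index_shift {sgn : ℂ} (hsgn : sgn = 1 ∨ sgn = -1) (j m : ℝ) (hm : m ≠ 0)
    (r : ℤ) (τ z : ℂ) :
    ThetaS sgn (j + 2 * m * r) m τ z = sgn ^ r * ThetaS sgn j m τ z := by
  rw [ThetaS, ThetaS, ← tsum_mul_left,
    ← (Equiv.addRight r).tsum_eq (fun n : ℤ => sgn ^ r * (sgn ^ n *
      mexp ((m : ℂ) * z * ((n : ℂ) + ((j / (2 * m) : ℝ) : ℂ)) +
        τ * (m : ℂ) * ((n : ℂ) + ((j / (2 * m) : ℝ) : ℂ)) ^ 2)))]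
  apply tsum_congr
  intro n
  simp only [Equiv.coe_addRight]
  have hsg : sgn ^ r * sgn ^ (n + r) = sgn ^ n := by
    rw [← sgn_zpow_add hsgn]
    exact sgn_zpow_congr hsgn (by omega)
  rw [← mul_assoc, hsg]
  congr 2
  have hmc : (m : ℂ) ≠ 0 := Complex.ofReal_ne_zero.2 hm
  push_cast
  field_simp
  ring

lemma RS_tau_shift (sgn : ℂ) (j m cc : ℝ) (hm : 0 < m) {τ : ℂ} (hτ : 0 < τ.im) (z : ℂ) :
    RS sgn j m τ (z + (cc : ℂ) * τ)
      = Complex.exp (2 * (Real.pi : ℂ) * Complex.I *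
          (τ * ((m * cc ^ 2 : ℝ) : ℂ) + ((2 * m * cc : ℝ) : ℂ) * z)) *
        RS sgn (j - 2 * m * cc) m τ z := by
  rw [RS, RS, ← tsum_mul_left]
  apply tsum_congr
  intro k
  have hψ : psiMN m (j - 2 * m * cc + 2 * m * k) τ z
      = psiMN m (j + 2 * m * k) τ (z + (cc : ℂ) * τ) := by
    rw [psiMN, psiMN]
    have him : (z + (cc : ℂ) * τ).im = z.im + cc * τ.im := by
      simp [Complex.add_im, Complex.mul_im]
    rw [him]
    congr 1
    field_simp
    ring
  rw [hψ]
  rw [show j - 2 * m * cc + 2 * m * (k : ℝ) - 1 / 2 - (j - 2 * m * cc) + 2 * m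
    = j + 2 * m * (k : ℝ) - 1 / 2 - j + 2 * m from by ring]
  apply exp_combine
  have hmc : (m : ℂ) ≠ 0 := Complex.ofReal_ne_zero.2 (ne_of_gt hm)
  push_cast
  field_simp
  ring

lemma RS_index_shift {sgn : ℂ} (hsgn : sgn = 1 ∨ sgn = -1) (x m : ℝ) (hm : 1 ≤ 2 * m)
    {τ : ℂ} (hτ : 0 < τ.im) (z : ℂ) :
    sgn * RS sgn (x + 2 * m) m τ z = RS sgn x m τ z
      - 2 * Complex.exp (-(Real.pi : ℂ) * Complex.I * ((x : ℝ) : ℂ) ^ 2 * τ / (2 * (m : ℂ))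
          + 2 * (Real.pi : ℂ) * Complex.I * ((x : ℝ) : ℂ) * z) := by
  have hm0 : (0:ℝ) < m := by linarith
  set B : ℂ := -(Real.pi : ℂ) * Complex.I * ((x : ℝ) : ℂ) ^ 2 * τ / (2 * (m : ℂ))
          + 2 * (Real.pi : ℂ) * Complex.I * ((x : ℝ) : ℂ) * z with hB
  have hsum := summable_RS_term hsgn x m hm hτ z
  have hg : Summable (fun k : ℤ => if k = 0 then (-2 : ℂ) * Complex.exp B else 0) := by
    apply summable_of_ne_finset_zero (s := ({0} : Finset ℤ))
    intro k hk
    simp only [Finset.mem_singleton] at hk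
    simp [hk]
  rw [RS, RS, ← tsum_mul_left,
    ← (Equiv.subRight (1:ℤ)).tsum_eq (fun k : ℤ => sgn * (sgn ^ k *
      (((Real.sign (x + 2 * m + 2 * m * k - 1 / 2 - (x + 2 * m) + 2 * m) -
          Efun (psiMN m (x + 2 * m + 2 * m * k) τ z) : ℝ)) : ℂ) *
      Complex.exp (-(Real.pi : ℂ) * Complex.I * (((x + 2 * m + 2 * m * k : ℝ)) : ℂ) ^ 2 * τ / (2 * (m : ℂ))
        + 2 * (Real.pi : ℂ) * Complex.I * (((x + 2 * m + 2 * m * k : ℝ)) : ℂ) * z)))]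
  have hpt : ∀ k : ℤ, (fun k : ℤ => sgn * (sgn ^ k *
      (((Real.sign (x + 2 * m + 2 * m * k - 1 / 2 - (x + 2 * m) + 2 * m) -
          Efun (psiMN m (x + 2 * m + 2 * m * k) τ z) : ℝ)) : ℂ) *
      Complex.exp (-(Real.pi : ℂ) * Complex.I * (((x + 2 * m + 2 * m * k : ℝ)) : ℂ) ^ 2 * τ / (2 * (m : ℂ))
        + 2 * (Real.pi : ℂ) * Complex.I * (((x + 2 * m + 2 * m * k : ℝ)) : ℂ) * z))) ((Equiv.subRight (1:ℤ)) k)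
      = (sgn ^ k *
      (((Real.sign (x + 2 * m * k - 1 / 2 - x + 2 * m) -
          Efun (psiMN m (x + 2 * m * k) τ z) : ℝ)) : ℂ) *
      Complex.exp (-(Real.pi : ℂ) * Complex.I * (((x + 2 * m * k : ℝ)) : ℂ) ^ 2 * τ / (2 * (m : ℂ))
        + 2 * (Real.pi : ℂ) * Complex.I * (((x + 2 * m * k : ℝ)) : ℂ) * z))
        + (if k = 0 then (-2 : ℂ) * Complex.exp B else 0) := by
    intro k
    simp only [Equiv.subRight_apply]
    have harg : x + 2 * m + 2 * m * ((k - 1 : ℤ) : ℝ) = x + 2 * m * (k : ℝ) := by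
      push_cast; ring
    rw [harg]
    have hsgnk : sgn * sgn ^ (k - 1) = sgn ^ k := by
      rw [show sgn * sgn ^ (k - 1) = sgn ^ (1 : ℤ) * sgn ^ (k - 1) from by rw [zpow_one],
        ← sgn_zpow_add hsgn]
      congr 1
      ring
    rw [← mul_assoc, ← mul_assoc, hsgnk]
    by_cases hk : k = 0
    · subst hk
      simp only [if_pos rfl]
      have hσL : Real.sign (x + 2 * m * ((0:ℤ) : ℝ) - 1 / 2 - (x + 2 * m) + 2 * m) = -1 := by
        apply Real.sign_of_neg
        push_cast
        linarith
      have hσR : Real.sign (x + 2 * m * ((0:ℤ) : ℝ) - 1 / 2 - x + 2 * m) = 1 := by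
        apply Real.sign_of_pos
        push_cast
        linarith
      rw [hσL, hσR]
      have hBeq : (-(Real.pi : ℂ) * Complex.I * (((x + 2 * m * ((0:ℤ):ℝ) : ℝ)) : ℂ) ^ 2 * τ / (2 * (m : ℂ))
          + 2 * (Real.pi : ℂ) * Complex.I * (((x + 2 * m * ((0:ℤ):ℝ) : ℝ)) : ℂ) * z) = B := by
        rw [hB]; push_cast; ring_nf
      rw [hBeq]
      simp only [zpow_zero, one_mul]
      push_cast
      ring
    · rw [if_neg hk, add_zero]
      congr 3
      rcases lt_or_gt_of_ne hk with hneg | hpos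
      · have hk'' : k ≤ -1 := by omega
        have hk' : (k : ℝ) ≤ -1 := by exact_mod_cast hk''
        rw [Real.sign_of_neg (by nlinarith), Real.sign_of_neg (by nlinarith)]
      · have hk' : (1 : ℝ) ≤ (k : ℝ) := by exact_mod_cast hpos
        rw [Real.sign_of_pos (by nlinarith), Real.sign_of_pos (by nlinarith)]
  rw [tsum_congr hpt, Summable.tsum_add hsum hg, tsum_ite_eq]
  ring

end


noncomputable section
open Complex MeasureTheory

lemma window_shift (G D : ℝ → ℂ) (N : ℕ)
    (hstep : ∀ x : ℝ, G (x + N) = G x - 2 * D x) :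
    ∀ (t : ℕ) (x : ℝ), (∑ i ∈ Finset.range N, G (x + t + i))
      = (∑ i ∈ Finset.range N, G (x + i)) - 2 * ∑ l ∈ Finset.range t, D (x + l) := by
  intro t
  induction t with
  | zero => intro x; simp
  | succ t ih =>
    intro x
    have h1 : (∑ i ∈ Finset.range N, G (x + (t + 1 : ℕ) + i))
        = ∑ i ∈ Finset.range N, G ((x + 1) + t + i) := by
      apply Finset.sum_congr rfl; intro i _; congr 1; push_cast; ring
    rw [h1, ih (x + 1)]
    have h2 : (∑ i ∈ Finset.range N, G ((x + 1) + i))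
        = (∑ i ∈ Finset.range N, G (x + i)) - 2 * D x := by
      have e1 : (∑ i ∈ Finset.range (N + 1), G (x + i))
          = (∑ i ∈ Finset.range N, G (x + (i + 1 : ℕ))) + G (x + (0 : ℕ)) :=
        Finset.sum_range_succ' _ _
      have e2 : (∑ i ∈ Finset.range (N + 1), G (x + i))
          = (∑ i ∈ Finset.range N, G (x + i)) + G (x + N) := Finset.sum_range_succ _ _
      have e3 : (∑ i ∈ Finset.range N, G (x + (i + 1 : ℕ)))
          = ∑ i ∈ Finset.range N, G ((x + 1) + i) := by
        apply Finset.sum_congr rfl; intro i _; congr 1; push_cast; ring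
      have e4 : G (x + N) = G x - 2 * D x := hstep x
      have e5 : G (x + (0 : ℕ)) = G x := by norm_num
      rw [e3, e5] at e1
      rw [e4] at e2
      rw [e1] at e2
      linear_combination e2
    have h3 : (∑ l ∈ Finset.range t, D ((x + 1) + l))
        = (∑ l ∈ Finset.range (t + 1), D (x + l)) - D x := by
      have e1 : (∑ l ∈ Finset.range (t + 1), D (x + l))
          = (∑ l ∈ Finset.range t, D (x + (l + 1 : ℕ))) + D (x + (0 : ℕ)) :=
        Finset.sum_range_succ' _ _
      have e3 : (∑ l ∈ Finset.range t, D (x + (l + 1 : ℕ)))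
          = ∑ l ∈ Finset.range t, D ((x + 1) + l) := by
        apply Finset.sum_congr rfl; intro l _; congr 1; push_cast; ring
      have e5 : D (x + (0 : ℕ)) = D x := by norm_num
      rw [e3, e5] at e1
      linear_combination -e1
    rw [h2, h3]
    ring

lemma phi_real_shift {sgn : ℂ} (hsgn : sgn = 1 ∨ sgn = -1) (m s : ℝ) (m2 : ℤ)
    (hm2 : m2 ≠ 0) (hm : m = (m2 : ℝ) / 2) (a b : ℤ) (hodd : Odd (m2 * (a + b)))
    (τ z₁ z₂ : ℂ) :
    PhiS sgn m s τ (z₁ + (a : ℂ)) (z₂ + (b : ℂ))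
      = mexp (((s * a : ℝ)) : ℂ) * PhiS (-sgn) m s τ z₁ z₂ := by
  rw [PhiS, PhiS, ← tsum_mul_left]
  apply tsum_congr
  intro n
  have hden : mexp (z₁ + (a : ℂ) + (n : ℂ) * τ) = mexp (z₁ + (n : ℂ) * τ) := by
    rw [show z₁ + (a : ℂ) + (n : ℂ) * τ = (z₁ + (n : ℂ) * τ) + ((a : ℤ) : ℂ) from by push_cast; ring,
      mexp_add, mexp_intCast, mul_one]
  rw [hden]
  have hsplit : (m : ℂ) * n * (z₁ + (a : ℂ) + (z₂ + (b : ℂ))) + (s : ℂ) * (z₁ + (a : ℂ))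
        + τ * ((m : ℂ) * n ^ 2 + (s : ℂ) * n)
      = ((m2 * (a + b) * n : ℤ) : ℂ) / 2 + (((s * a : ℝ)) : ℂ)
        + ((m : ℂ) * n * (z₁ + z₂) + (s : ℂ) * z₁ + τ * ((m : ℂ) * n ^ 2 + (s : ℂ) * n)) := by
    subst hm
    push_cast
    ring
  rw [hsplit, mexp_add, mexp_add, mexp_int_half,
    show m2 * (a + b) * n = (m2 * (a + b)) * n from by ring,
    neg_one_zpow_odd_mul hodd n]
  have hneg : (-sgn) ^ n = (-1 : ℂ) ^ n * sgn ^ n := by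
    rw [← neg_one_mul, mul_zpow]
  rw [hneg]
  field_simp

lemma theta_real_shift {sgn : ℂ} (hsgn : sgn = 1 ∨ sgn = -1) (j m : ℝ) (m2 : ℤ)
    (hm2 : m2 ≠ 0) (hm : m = (m2 : ℝ) / 2) (v : ℤ) (hodd : Odd (m2 * v)) (τ z : ℂ) :
    ThetaS sgn j m τ (z + (v : ℂ))
      = mexp (((j * v / 2 : ℝ)) : ℂ) * ThetaS (-sgn) j m τ z := by
  rw [ThetaS, ThetaS, ← tsum_mul_left]
  apply tsum_congr
  intro n
  have hsplit : (m : ℂ) * (z + (v : ℂ)) * ((n : ℂ) + ((j / (2 * m) : ℝ) : ℂ))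
        + τ * (m : ℂ) * ((n : ℂ) + ((j / (2 * m) : ℝ) : ℂ)) ^ 2
      = ((m2 * v * n : ℤ) : ℂ) / 2 + (((j * v / 2 : ℝ)) : ℂ)
        + ((m : ℂ) * z * ((n : ℂ) + ((j / (2 * m) : ℝ) : ℂ))
          + τ * (m : ℂ) * ((n : ℂ) + ((j / (2 * m) : ℝ) : ℂ)) ^ 2) := by
    subst hm
    have hm2c : ((m2 : ℤ) : ℂ) ≠ 0 := Int.cast_ne_zero.2 hm2
    push_cast
    rw [show (2 : ℂ) * ((m2 : ℂ) / 2) = (m2 : ℂ) from by ring]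
    field_simp [hm2c]
    ring
  rw [hsplit, mexp_add, mexp_add, mexp_int_half,
    show m2 * v * n = (m2 * v) * n from by ring, neg_one_zpow_odd_mul hodd n]
  have hneg : (-sgn) ^ n = (-1 : ℂ) ^ n * sgn ^ n := by
    rw [← neg_one_mul, mul_zpow]
  rw [hneg]
  ring

lemma RS_real_shift {sgn : ℂ} (hsgn : sgn = 1 ∨ sgn = -1) (j m : ℝ) (m2 : ℤ)
    (hm2 : m2 ≠ 0) (hm : m = (m2 : ℝ) / 2) (v : ℤ) (hodd : Odd (m2 * v)) (τ z : ℂ) :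
    RS sgn j m τ (z + (v : ℂ) / 2)
      = mexp (((j * v / 2 : ℝ)) : ℂ) * RS (-sgn) j m τ z := by
  rw [RS, RS, ← tsum_mul_left]
  apply tsum_congr
  intro k
  have hψ : psiMN m (j + 2 * m * k) τ (z + (v : ℂ) / 2) = psiMN m (j + 2 * m * k) τ z := by
    rw [psiMN, psiMN]
    have him : (z + (v : ℂ) / 2).im = z.im := by
      simp [Complex.add_im]
    rw [him]
  rw [hψ]
  have hsplit : (-(Real.pi : ℂ) * Complex.I * (((j + 2 * m * k : ℝ)) : ℂ) ^ 2 * τ / (2 * (m : ℂ))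
        + 2 * (Real.pi : ℂ) * Complex.I * (((j + 2 * m * k : ℝ)) : ℂ) * (z + (v : ℂ) / 2))
      = 2 * (Real.pi : ℂ) * Complex.I * (((j * v / 2 : ℝ)) : ℂ)
        + (2 * (Real.pi : ℂ) * Complex.I * (((m2 * v * k : ℤ) : ℂ) / 2)
        + (-(Real.pi : ℂ) * Complex.I * (((j + 2 * m * k : ℝ)) : ℂ) ^ 2 * τ / (2 * (m : ℂ))
          + 2 * (Real.pi : ℂ) * Complex.I * (((j + 2 * m * k : ℝ)) : ℂ) * z)) := by
    subst hm
    push_cast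
    ring
  rw [hsplit, Complex.exp_add, Complex.exp_add,
    show Complex.exp (2 * (Real.pi : ℂ) * Complex.I * (((j * v / 2 : ℝ)) : ℂ))
      = mexp (((j * v / 2 : ℝ)) : ℂ) from rfl,
    show Complex.exp (2 * (Real.pi : ℂ) * Complex.I * (((m2 * v * k : ℤ) : ℂ) / 2))
      = mexp (((m2 * v * k : ℤ) : ℂ) / 2) from rfl,
    mexp_int_half, show m2 * v * k = (m2 * v) * k from by ring,
    neg_one_zpow_odd_mul hodd k]
  have hneg : (-sgn) ^ k = (-1 : ℂ) ^ k * sgn ^ k := by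
    rw [← neg_one_mul, mul_zpow]
  rw [hneg]
  ring
end



noncomputable section
open Complex MeasureTheory

/-- The summand of `PhiS`. -/
def phiterm (sgn : ℂ) (m s : ℝ) (τ z₁ z₂ : ℂ) (n : ℤ) : ℂ :=
  sgn ^ n *
    mexp ((m : ℂ) * n * (z₁ + z₂) + (s : ℂ) * z₁ + τ * ((m : ℂ) * n ^ 2 + (s : ℂ) * n)) /
    (1 - mexp (z₁ + n * τ))

/-- The summand of `ThetaS`. -/
def thetaterm (sgn : ℂ) (j m : ℝ) (τ z : ℂ) (n : ℤ) : ℂ :=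
  sgn ^ n *
    mexp ((m : ℂ) * z * ((n : ℂ) + ((j / (2 * m) : ℝ) : ℂ)) +
      τ * (m : ℂ) * ((n : ℂ) + ((j / (2 * m) : ℝ) : ℂ)) ^ 2)

/-- The correction summand appearing in the elliptic transformation of `PhiS`. -/
def extraterm (sgn : ℂ) (m s : ℝ) (t : ℤ) (τ z₁ z₂ : ℂ) (k : ℤ) : ℂ :=
  sgn ^ k *
    mexp ((m : ℂ) * k * (z₁ + z₂) + (s : ℂ) * z₁ + τ * ((m : ℂ) * k ^ 2 + (s : ℂ) * k)) *
    ((mexp (z₁ + k * τ) ^ t - 1) / (1 - mexp (z₁ + k * τ)))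

/-- The theta coefficient `q^{-j²/(4m)} e(j(z₁-z₂)/2) Θ_j`. -/
def Ddef (sgn : ℂ) (m : ℝ) (τ z₁ z₂ : ℂ) (x : ℝ) : ℂ :=
  Complex.exp (-(Real.pi : ℂ) * Complex.I * ((x : ℝ) : ℂ) ^ 2 * τ / (2 * (m : ℂ))
      + 2 * (Real.pi : ℂ) * Complex.I * ((x : ℝ) : ℂ) * ((z₁ - z₂) / 2)) *
    ThetaS sgn x m τ (z₁ + z₂)

/-- The summand of `PhiAddS`. -/
def Gdef (sgn : ℂ) (m : ℝ) (τ z₁ z₂ : ℂ) (x : ℝ) : ℂ :=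
  RS sgn x m τ ((z₁ - z₂) / 2) * ThetaS sgn x m τ (z₁ + z₂)

lemma PhiS_eq (sgn : ℂ) (m s : ℝ) (τ z₁ z₂ : ℂ) :
    PhiS sgn m s τ z₁ z₂ = ∑' n : ℤ, phiterm sgn m s τ z₁ z₂ n := rfl

lemma ThetaS_eq (sgn : ℂ) (j m : ℝ) (τ z : ℂ) :
    ThetaS sgn j m τ z = ∑' n : ℤ, thetaterm sgn j m τ z n := rfl

lemma mexp_npow (x : ℂ) (l : ℕ) : mexp x ^ l = mexp ((l : ℂ) * x) := by
  rw [← zpow_natCast, mexp_zpow]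
  norm_num

lemma mexp_split_exp (s C A B : ℂ)
    (h : 2 * (Real.pi : ℂ) * Complex.I * B = C + 2 * (Real.pi : ℂ) * Complex.I * A) :
    s * mexp B = Complex.exp C * (s * mexp A) := by
  rw [mexp, mexp, h, Complex.exp_add]
  ring

/-- Step (I): termwise elliptic transformation of the Φ-summand. -/
lemma phiterm_shift {sgn : ℂ} (hsgn : sgn = 1 ∨ sgn = -1) (m2 s2 a b t : ℤ) (hm2 : m2 ≠ 0)
    (ht2 : 2 * t = m2 * (b - a) - 1) (τ z₁ z₂ : ℂ)
    (hz1 : ∀ k : ℤ, mexp (z₁ + (k : ℂ) * τ) ≠ 1) (k : ℤ) :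
    phiterm sgn ((m2 : ℝ) / 2) ((s2 : ℝ) / 2) τ (z₁ + (a : ℂ) * τ) (z₂ + (b : ℂ) * τ) (k - a)
      = (sgn ^ a * mexp (-((m2 : ℂ) / 2) * ((b : ℂ) * z₁ + (a : ℂ) * z₂)) *
          mexp (τ * (-((m2 : ℂ) / 2 * a * b)))) *
          phiterm sgn ((m2 : ℝ) / 2) ((s2 : ℝ) / 2 + 1 / 2) τ z₁ z₂ k
        + (sgn ^ a * mexp (-((m2 : ℂ) / 2) * ((b : ℂ) * z₁ + (a : ℂ) * z₂)) *
          mexp (τ * (-((m2 : ℂ) / 2 * a * b)))) *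
          extraterm sgn ((m2 : ℝ) / 2) ((s2 : ℝ) / 2 + 1 / 2) t τ z₁ z₂ k := by
  have htC : (t : ℂ) = ((m2 : ℂ) * ((b : ℂ) - (a : ℂ)) - 1) / 2 := by
    have h := congrArg (fun x : ℤ => (x : ℂ)) ht2
    push_cast at h
    linear_combination h / 2
  rw [phiterm, phiterm, extraterm]
  rw [show z₁ + (a : ℂ) * τ + ((k - a : ℤ) : ℂ) * τ = z₁ + (k : ℂ) * τ from by push_cast; ring]
  have hWne : (1 : ℂ) - mexp (z₁ + (k : ℂ) * τ) ≠ 0 := sub_ne_zero.2 (Ne.symm (hz1 k))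
  have hsk : sgn ^ (k - a) = sgn ^ a * sgn ^ k := by
    rw [← sgn_zpow_add hsgn]
    exact sgn_zpow_congr hsgn (by omega)
  rw [hsk]
  rw [show ((((m2 : ℝ) / 2 : ℝ)) : ℂ) * ((k - a : ℤ) : ℂ) * (z₁ + (a : ℂ) * τ + (z₂ + (b : ℂ) * τ))
        + ((((s2 : ℝ) / 2 : ℝ)) : ℂ) * (z₁ + (a : ℂ) * τ)
        + τ * (((((m2 : ℝ) / 2 : ℝ)) : ℂ) * ((k - a : ℤ) : ℂ) ^ 2
          + ((((s2 : ℝ) / 2 : ℝ)) : ℂ) * ((k - a : ℤ) : ℂ))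
      = (-((m2 : ℂ) / 2) * ((b : ℂ) * z₁ + (a : ℂ) * z₂)) + ((τ * (-((m2 : ℂ) / 2 * a * b)))
        + (((t : ℂ) * (z₁ + (k : ℂ) * τ))
        + (((((m2 : ℝ) / 2 : ℝ)) : ℂ) * (k : ℂ) * (z₁ + z₂)
          + ((((s2 : ℝ) / 2 + 1 / 2 : ℝ)) : ℂ) * z₁
          + τ * (((((m2 : ℝ) / 2 : ℝ)) : ℂ) * (k : ℂ) ^ 2
            + ((((s2 : ℝ) / 2 + 1 / 2 : ℝ)) : ℂ) * (k : ℂ))))) from by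
    rw [htC]; push_cast; ring]
  rw [mexp_add, mexp_add, mexp_add, ← mexp_zpow]
  field_simp
  ring

end


noncomputable section
open Complex MeasureTheory

lemma extraterm_eq_pos (sgn : ℂ) (m s' : ℝ) (hm : m ≠ 0) {t : ℤ} (ht : 0 ≤ t)
    (τ z₁ z₂ : ℂ) (hz1 : ∀ k : ℤ, mexp (z₁ + (k : ℂ) * τ) ≠ 1) (k : ℤ) :
    extraterm sgn m s' t τ z₁ z₂ k
      = ∑ l ∈ Finset.range t.toNat,
          -(Complex.exp (-(Real.pi : ℂ) * Complex.I * (((s' + l : ℝ)) : ℂ) ^ 2 * τ / (2 * (m : ℂ))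
              + 2 * (Real.pi : ℂ) * Complex.I * (((s' + l : ℝ)) : ℂ) * ((z₁ - z₂) / 2)) *
            thetaterm sgn (s' + l) m τ (z₁ + z₂) k) := by
  rw [extraterm]
  have hWne : (1 : ℂ) - mexp (z₁ + (k : ℂ) * τ) ≠ 0 := sub_ne_zero.2 (Ne.symm (hz1 k))
  have hgeom : (mexp (z₁ + (k : ℂ) * τ) ^ t - 1) / (1 - mexp (z₁ + (k : ℂ) * τ))
      = -∑ l ∈ Finset.range t.toNat, mexp (z₁ + (k : ℂ) * τ) ^ l := by
    rw [div_eq_iff hWne,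
      show mexp (z₁ + (k : ℂ) * τ) ^ t = mexp (z₁ + (k : ℂ) * τ) ^ t.toNat from by
        rw [← zpow_natCast, Int.toNat_of_nonneg ht]]
    linear_combination (-1 : ℂ) * geom_sum_mul (mexp (z₁ + (k : ℂ) * τ)) t.toNat
  rw [hgeom, Finset.sum_neg_distrib, mul_neg, Finset.mul_sum]
  congr 1
  apply Finset.sum_congr rfl
  intro l _
  rw [mexp_npow, mul_assoc, ← mexp_add, thetaterm]
  apply mexp_split_exp
  have hmc : (m : ℂ) ≠ 0 := Complex.ofReal_ne_zero.2 hm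
  push_cast
  field_simp
  ring

lemma extraterm_eq_neg (sgn : ℂ) (m s' : ℝ) (hm : m ≠ 0) {t : ℤ} (ht : t < 0)
    (τ z₁ z₂ : ℂ) (hz1 : ∀ k : ℤ, mexp (z₁ + (k : ℂ) * τ) ≠ 1) (k : ℤ) :
    extraterm sgn m s' t τ z₁ z₂ k
      = ∑ l ∈ Finset.range (-t).toNat,
          (Complex.exp (-(Real.pi : ℂ) * Complex.I * (((s' + t + l : ℝ)) : ℂ) ^ 2 * τ / (2 * (m : ℂ))
              + 2 * (Real.pi : ℂ) * Complex.I * (((s' + t + l : ℝ)) : ℂ) * ((z₁ - z₂) / 2)) *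
            thetaterm sgn (s' + t + l) m τ (z₁ + z₂) k) := by
  rw [extraterm]
  have hWne : (1 : ℂ) - mexp (z₁ + (k : ℂ) * τ) ≠ 0 := sub_ne_zero.2 (Ne.symm (hz1 k))
  have hW0 : mexp (z₁ + (k : ℂ) * τ) ≠ 0 := mexp_ne_zero _
  have h2 : mexp (z₁ + (k : ℂ) * τ) ^ t * mexp (z₁ + (k : ℂ) * τ) ^ ((-t).toNat) = 1 := by
    rw [← zpow_natCast, ← zpow_add₀ hW0, show t + ((-t).toNat : ℤ) = 0 from by omega, zpow_zero]
  have hgeom : (mexp (z₁ + (k : ℂ) * τ) ^ t - 1) / (1 - mexp (z₁ + (k : ℂ) * τ))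
      = ∑ l ∈ Finset.range (-t).toNat, mexp (z₁ + (k : ℂ) * τ) ^ (t + l) := by
    have h1 : (∑ l ∈ Finset.range (-t).toNat, mexp (z₁ + (k : ℂ) * τ) ^ (t + l))
        = mexp (z₁ + (k : ℂ) * τ) ^ t * ∑ l ∈ Finset.range (-t).toNat, mexp (z₁ + (k : ℂ) * τ) ^ l := by
      rw [Finset.mul_sum]
      apply Finset.sum_congr rfl
      intro l _
      rw [zpow_add₀ hW0, zpow_natCast]
    rw [div_eq_iff hWne, h1]
    linear_combination (mexp (z₁ + (k : ℂ) * τ) ^ t)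
      * geom_sum_mul (mexp (z₁ + (k : ℂ) * τ)) ((-t).toNat) + h2
  rw [hgeom, Finset.mul_sum]
  apply Finset.sum_congr rfl
  intro l _
  rw [show mexp (z₁ + (k : ℂ) * τ) ^ (t + (l : ℤ)) = mexp (((t + (l : ℤ) : ℤ) : ℂ) * (z₁ + (k : ℂ) * τ)) from
      mexp_zpow _ _,
    mul_assoc, ← mexp_add, thetaterm]
  apply mexp_split_exp
  have hmc : (m : ℂ) ≠ 0 := Complex.ofReal_ne_zero.2 hm
  push_cast
  field_simp
  ring

lemma theta_index_one {sgn : ℂ} (hsgn : sgn = 1 ∨ sgn = -1) (j m : ℝ) (hm : m ≠ 0)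
    (τ z : ℂ) : ThetaS sgn (j + 2 * m) m τ z = sgn * ThetaS sgn j m τ z := by
  have h := theta_index_shift hsgn j m hm 1 τ z
  rw [show j + 2 * m * ((1 : ℤ) : ℝ) = j + 2 * m from by push_cast; ring, zpow_one] at h
  exact h

lemma G_step {sgn : ℂ} (hsgn : sgn = 1 ∨ sgn = -1) (m2 : ℤ) (hm2 : 0 < m2)
    {τ : ℂ} (hτ : 0 < τ.im) (z₁ z₂ : ℂ) (x : ℝ) :
    Gdef sgn ((m2 : ℝ) / 2) τ z₁ z₂ (x + 2 * ((m2 : ℝ) / 2))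
      = Gdef sgn ((m2 : ℝ) / 2) τ z₁ z₂ x - 2 * Ddef sgn ((m2 : ℝ) / 2) τ z₁ z₂ x := by
  have hm2R : (1 : ℝ) ≤ 2 * ((m2 : ℝ) / 2) := by
    have : (1 : ℝ) ≤ (m2 : ℝ) := by exact_mod_cast hm2
    linarith
  have hmne : ((m2 : ℝ) / 2 : ℝ) ≠ 0 := by positivity
  have hRS := RS_index_shift hsgn x ((m2 : ℝ) / 2) hm2R hτ ((z₁ - z₂) / 2)
  rw [Gdef, Gdef, Ddef, theta_index_one hsgn x ((m2 : ℝ) / 2) hmne τ (z₁ + z₂)]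
  linear_combination (ThetaS sgn x ((m2 : ℝ) / 2) τ (z₁ + z₂)) * hRS

lemma phiadd_shift {sgn : ℂ} (hsgn : sgn = 1 ∨ sgn = -1) (m2 s2 a b t : ℤ) (hm2 : 0 < m2)
    (ht2 : 2 * t = m2 * (b - a) - 1) {τ : ℂ} (hτ : 0 < τ.im) (z₁ z₂ : ℂ) :
    PhiAddS sgn ((m2 : ℝ) / 2) ((s2 : ℝ) / 2) τ (z₁ + (a : ℂ) * τ) (z₂ + (b : ℂ) * τ)
      = (sgn ^ a * mexp (-((m2 : ℂ) / 2) * ((b : ℂ) * z₁ + (a : ℂ) * z₂)) *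
          mexp (τ * (-((m2 : ℂ) / 2 * a * b)))) *
        ∑ i ∈ Finset.range m2.toNat,
          Gdef sgn ((m2 : ℝ) / 2) τ z₁ z₂ (((s2 : ℝ) / 2 + 1 / 2) + (t : ℝ) + (i : ℕ)) := by
  have hm0 : (0 : ℝ) < (m2 : ℝ) / 2 := by positivity
  have hmne : ((m2 : ℝ) / 2 : ℝ) ≠ 0 := ne_of_gt hm0
  have htR : (t : ℝ) = ((m2 : ℝ) * ((b : ℝ) - (a : ℝ)) - 1) / 2 := by
    have h := congrArg (fun x : ℤ => (x : ℝ)) ht2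
    push_cast at h
    linarith
  have hN : ⌈2 * ((m2 : ℝ) / 2)⌉₊ = m2.toNat := by
    rw [show 2 * ((m2 : ℝ) / 2) = ((m2 : ℤ) : ℝ) from by push_cast; ring, Nat.ceil_intCast]
  rw [PhiAddS, hN, Finset.mul_sum]
  apply Finset.sum_congr rfl
  intro i _
  rw [show (z₁ + (a : ℂ) * τ - (z₂ + (b : ℂ) * τ)) / 2
      = (z₁ - z₂) / 2 + (((((a : ℝ) - (b : ℝ)) / 2 : ℝ)) : ℂ) * τ from by push_cast; ring,
    RS_tau_shift sgn ((s2 : ℝ) / 2 + i) ((m2 : ℝ) / 2) (((a : ℝ) - (b : ℝ)) / 2) hm0 hτ,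
    show z₁ + (a : ℂ) * τ + (z₂ + (b : ℂ) * τ)
      = (z₁ + z₂) + ((((a : ℝ) + (b : ℝ) : ℝ)) : ℂ) * τ from by push_cast; ring,
    theta_tau_shift sgn ((s2 : ℝ) / 2 + i) ((m2 : ℝ) / 2) ((a : ℝ) + (b : ℝ)) hmne τ (z₁ + z₂),
    show (s2 : ℝ) / 2 + (i : ℕ) + ((m2 : ℝ) / 2) * ((a : ℝ) + (b : ℝ))
      = ((s2 : ℝ) / 2 + (i : ℕ) - 2 * ((m2 : ℝ) / 2) * (((a : ℝ) - (b : ℝ)) / 2))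
        + 2 * ((m2 : ℝ) / 2) * ((a : ℤ) : ℝ) from by push_cast; ring,
    theta_index_shift hsgn ((s2 : ℝ) / 2 + (i : ℕ) - 2 * ((m2 : ℝ) / 2) * (((a : ℝ) - (b : ℝ)) / 2))
      ((m2 : ℝ) / 2) hmne a τ (z₁ + z₂),
    show (s2 : ℝ) / 2 + (i : ℕ) - 2 * ((m2 : ℝ) / 2) * (((a : ℝ) - (b : ℝ)) / 2)
      = ((s2 : ℝ) / 2 + 1 / 2) + (t : ℝ) + (i : ℕ) from by rw [htR]; ring, Gdef]
  have hPP : Complex.exp (2 * (Real.pi : ℂ) * Complex.I *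
        (τ * ((((m2 : ℝ) / 2) * (((a : ℝ) - (b : ℝ)) / 2) ^ 2 : ℝ) : ℂ)
          + (((2 * ((m2 : ℝ) / 2) * (((a : ℝ) - (b : ℝ)) / 2) : ℝ)) : ℂ) * ((z₁ - z₂) / 2)))
      * mexp (-(τ * ((((m2 : ℝ) / 2) * ((a : ℝ) + (b : ℝ)) ^ 2 / 4 : ℝ) : ℂ))
          - ((((m2 : ℝ) / 2) * ((a : ℝ) + (b : ℝ)) / 2 : ℝ) : ℂ) * (z₁ + z₂)) * sgn ^ a
      = sgn ^ a * mexp (-((m2 : ℂ) / 2) * ((b : ℂ) * z₁ + (a : ℂ) * z₂)) *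
          mexp (τ * (-((m2 : ℂ) / 2 * a * b))) := by
    simp only [mexp]
    rw [show (2 * (Real.pi : ℂ) * Complex.I *
        (τ * ((((m2 : ℝ) / 2) * (((a : ℝ) - (b : ℝ)) / 2) ^ 2 : ℝ) : ℂ)
          + (((2 * ((m2 : ℝ) / 2) * (((a : ℝ) - (b : ℝ)) / 2) : ℝ)) : ℂ) * ((z₁ - z₂) / 2)))
      = (2 * (Real.pi : ℂ) * Complex.I * (-((m2 : ℂ) / 2) * ((b : ℂ) * z₁ + (a : ℂ) * z₂))
          + 2 * (Real.pi : ℂ) * Complex.I * (τ * (-((m2 : ℂ) / 2 * a * b))))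
        - (2 * (Real.pi : ℂ) * Complex.I *
          (-(τ * ((((m2 : ℝ) / 2) * ((a : ℝ) + (b : ℝ)) ^ 2 / 4 : ℝ) : ℂ))
          - ((((m2 : ℝ) / 2) * ((a : ℝ) + (b : ℝ)) / 2 : ℝ) : ℂ) * (z₁ + z₂))) from by
        push_cast; ring,
      Complex.exp_sub, Complex.exp_add]
    field_simp [Complex.exp_ne_zero]
  linear_combination (RS sgn (((s2 : ℝ) / 2 + 1 / 2) + (t : ℝ) + (i : ℕ)) ((m2 : ℝ) / 2) τ ((z₁ - z₂) / 2)
    * ThetaS sgn (((s2 : ℝ) / 2 + 1 / 2) + (t : ℝ) + (i : ℕ)) ((m2 : ℝ) / 2) τ (z₁ + z₂)) * hPP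
end


/-- elliptic transformations of `Φ̃^{±[m;s]}` for non-integral
`m = m2/2 ∈ (1/2)ℤ_{>0}` (`m2` odd), `s = s2/2 ∈ (1/2)ℤ`, and `a, b ∈ ℤ` of
different parity.  Here `q^{-mab} = mexp (τ * (-(m*a*b)))` and `∓` is `-sgn`. -/
theorem stmt7 (m2 : ℤ) (hm2 : 0 < m2) (hm2odd : Odd m2) (s2 : ℤ)
    (sgn : ℂ) (hsgn : sgn = 1 ∨ sgn = -1)
    (a b : ℤ) (hab : a % 2 ≠ b % 2)
    (τ z₁ z₂ : ℂ) (hτ : 0 < τ.im) (hz : ∀ x y : ℤ, z₁ ≠ (x : ℂ) + (y : ℂ) * τ) :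
    PhiTilde sgn ((m2 : ℝ) / 2) ((s2 : ℝ) / 2) τ (z₁ + a * τ) (z₂ + b * τ) =
      sgn ^ a * mexp (-((m2 : ℂ) / 2) * ((b : ℂ) * z₁ + (a : ℂ) * z₂)) *
        mexp (τ * (-((m2 : ℂ) / 2 * a * b))) *
        PhiTilde sgn ((m2 : ℝ) / 2) ((s2 : ℝ) / 2 + 1 / 2) τ z₁ z₂ ∧
    PhiTilde sgn ((m2 : ℝ) / 2) ((s2 : ℝ) / 2) τ (z₁ + a) (z₂ + b) =
      mexp ((s2 : ℂ) / 2 * a) * PhiTilde (-sgn) ((m2 : ℝ) / 2) ((s2 : ℝ) / 2) τ z₁ z₂ := by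
  have hoddab : Odd (a + b) := Int.odd_iff.2 (by omega)
  have hoddsub : Odd (a - b) := Int.odd_iff.2 (by omega)
  have hodd1 : Odd (m2 * (a + b)) := hm2odd.mul hoddab
  have hodd2 : Odd (m2 * (a - b)) := hm2odd.mul hoddsub
  have hm2ne : m2 ≠ 0 := by omega
  constructor
  · have hm0 : (0 : ℝ) < (m2 : ℝ) / 2 := by positivity
    have hmne : ((m2 : ℝ) / 2 : ℝ) ≠ 0 := ne_of_gt hm0
    have hoddba : Odd (m2 * (b - a)) := hm2odd.mul (Int.odd_iff.2 (by omega))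
    have ht2 : 2 * ((m2 * (b - a) - 1) / 2) = m2 * (b - a) - 1 := by
      have := Int.odd_iff.1 hoddba
      omega
    set t : ℤ := (m2 * (b - a) - 1) / 2 with hts
    have hz1 : ∀ k : ℤ, mexp (z₁ + (k : ℂ) * τ) ≠ 1 := by
      intro k hk
      rw [mexp, Complex.exp_eq_one_iff] at hk
      obtain ⟨n, hn⟩ := hk
      apply hz n (-k)
      have h2 : (2 * (Real.pi : ℂ) * Complex.I) ≠ 0 := by
        simp [Real.pi_ne_zero, Complex.I_ne_zero, Complex.ofReal_ne_zero]
      have h3 : z₁ + (k : ℂ) * τ = (n : ℂ) :=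
        mul_left_cancel₀ h2 (hn.trans (by ring))
      push_cast
      linear_combination h3
    have hsum_main : Summable (phiterm sgn ((m2 : ℝ) / 2) ((s2 : ℝ) / 2 + 1 / 2) τ z₁ z₂) :=
      summable_phi_term hsgn ((m2 : ℝ) / 2) ((s2 : ℝ) / 2 + 1 / 2) hm0 hτ z₁ z₂
    have hsum_theta : ∀ x : ℝ, Summable (thetaterm sgn x ((m2 : ℝ) / 2) τ (z₁ + z₂)) :=
      fun x => summable_theta_term hsgn x ((m2 : ℝ) / 2) hm0 hτ (z₁ + z₂)
    have hN : ⌈2 * ((m2 : ℝ) / 2)⌉₊ = m2.toNat := by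
      rw [show 2 * ((m2 : ℝ) / 2) = ((m2 : ℤ) : ℝ) from by push_cast; ring, Nat.ceil_intCast]
    have hcast : ∀ x : ℝ, x + ((m2.toNat : ℕ) : ℝ) = x + 2 * ((m2 : ℝ) / 2) := by
      intro x
      have : ((m2.toNat : ℕ) : ℝ) = ((m2 : ℤ) : ℝ) := by
        exact_mod_cast congrArg (fun u : ℤ => (u : ℝ)) (Int.toNat_of_nonneg hm2.le)
      rw [this]; ring
    have hstep : ∀ x : ℝ, Gdef sgn ((m2 : ℝ) / 2) τ z₁ z₂ (x + ((m2.toNat : ℕ) : ℝ))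
        = Gdef sgn ((m2 : ℝ) / 2) τ z₁ z₂ x - 2 * Ddef sgn ((m2 : ℝ) / 2) τ z₁ z₂ x := by
      intro x
      rw [hcast x]
      exact G_step hsgn m2 hm2 hτ z₁ z₂ x
    have hAddS' : PhiAddS sgn ((m2 : ℝ) / 2) ((s2 : ℝ) / 2 + 1 / 2) τ z₁ z₂
        = ∑ i ∈ Finset.range m2.toNat,
            Gdef sgn ((m2 : ℝ) / 2) τ z₁ z₂ (((s2 : ℝ) / 2 + 1 / 2) + (i : ℕ)) := by
      rw [PhiAddS, hN]
      rfl
    have hPhiAdd := phiadd_shift hsgn m2 s2 a b t hm2 ht2 hτ z₁ z₂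
    have hPhiS : PhiS sgn ((m2 : ℝ) / 2) ((s2 : ℝ) / 2) τ (z₁ + (a : ℂ) * τ) (z₂ + (b : ℂ) * τ)
        = (sgn ^ a * mexp (-((m2 : ℂ) / 2) * ((b : ℂ) * z₁ + (a : ℂ) * z₂)) *
            mexp (τ * (-((m2 : ℂ) / 2 * a * b)))) *
            PhiS sgn ((m2 : ℝ) / 2) ((s2 : ℝ) / 2 + 1 / 2) τ z₁ z₂
          + (sgn ^ a * mexp (-((m2 : ℂ) / 2) * ((b : ℂ) * z₁ + (a : ℂ) * z₂)) *
            mexp (τ * (-((m2 : ℂ) / 2 * a * b)))) *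
            ∑' k : ℤ, extraterm sgn ((m2 : ℝ) / 2) ((s2 : ℝ) / 2 + 1 / 2) t τ z₁ z₂ k := by
      rcases le_or_gt 0 t with htpos | htneg
      · have hsum_extra : Summable (extraterm sgn ((m2 : ℝ) / 2) ((s2 : ℝ) / 2 + 1 / 2) t τ z₁ z₂) := by
          apply Summable.congr _ (fun k =>
            (extraterm_eq_pos sgn ((m2 : ℝ) / 2) ((s2 : ℝ) / 2 + 1 / 2) hmne htpos τ z₁ z₂ hz1 k).symm)
          apply summable_sum
          intro l _
          exact ((hsum_theta _).mul_left _).neg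
        rw [PhiS_eq,
          ← (Equiv.subRight (a : ℤ)).tsum_eq
            (fun n : ℤ => phiterm sgn ((m2 : ℝ) / 2) ((s2 : ℝ) / 2) τ (z₁ + (a : ℂ) * τ) (z₂ + (b : ℂ) * τ) n),
          tsum_congr (fun k : ℤ => by
            simpa only [Equiv.subRight_apply] using
              phiterm_shift hsgn m2 s2 a b t hm2ne ht2 τ z₁ z₂ hz1 k),
          Summable.tsum_add (hsum_main.mul_left _) (hsum_extra.mul_left _), tsum_mul_left, tsum_mul_left,
          PhiS_eq]
      · have hsum_extra : Summable (extraterm sgn ((m2 : ℝ) / 2) ((s2 : ℝ) / 2 + 1 / 2) t τ z₁ z₂) := by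
          apply Summable.congr _ (fun k =>
            (extraterm_eq_neg sgn ((m2 : ℝ) / 2) ((s2 : ℝ) / 2 + 1 / 2) hmne htneg τ z₁ z₂ hz1 k).symm)
          apply summable_sum
          intro l _
          exact (hsum_theta _).mul_left _
        rw [PhiS_eq,
          ← (Equiv.subRight (a : ℤ)).tsum_eq
            (fun n : ℤ => phiterm sgn ((m2 : ℝ) / 2) ((s2 : ℝ) / 2) τ (z₁ + (a : ℂ) * τ) (z₂ + (b : ℂ) * τ) n),
          tsum_congr (fun k : ℤ => by
            simpa only [Equiv.subRight_apply] using
              phiterm_shift hsgn m2 s2 a b t hm2ne ht2 τ z₁ z₂ hz1 k),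
          Summable.tsum_add (hsum_main.mul_left _) (hsum_extra.mul_left _), tsum_mul_left, tsum_mul_left,
          PhiS_eq]
    rw [PhiTilde, PhiTilde, hPhiS, hPhiAdd, hAddS']
    rcases le_or_gt 0 t with htpos | htneg
    · have htsum_extra : ∑' k : ℤ, extraterm sgn ((m2 : ℝ) / 2) ((s2 : ℝ) / 2 + 1 / 2) t τ z₁ z₂ k
          = - ∑ l ∈ Finset.range t.toNat,
              Ddef sgn ((m2 : ℝ) / 2) τ z₁ z₂ (((s2 : ℝ) / 2 + 1 / 2) + (l : ℕ)) := by
        rw [tsum_congr (fun k =>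
            extraterm_eq_pos sgn ((m2 : ℝ) / 2) ((s2 : ℝ) / 2 + 1 / 2) hmne htpos τ z₁ z₂ hz1 k),
          Summable.tsum_finsetSum (fun l _ => ((hsum_theta _).mul_left _).neg), ← Finset.sum_neg_distrib]
        apply Finset.sum_congr rfl
        intro l _
        rw [tsum_neg, tsum_mul_left, Ddef, ThetaS_eq]
      have hwin := window_shift (Gdef sgn ((m2 : ℝ) / 2) τ z₁ z₂)
        (Ddef sgn ((m2 : ℝ) / 2) τ z₁ z₂) m2.toNat hstep t.toNat ((s2 : ℝ) / 2 + 1 / 2)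
      have htnn : ((t.toNat : ℕ) : ℝ) = (t : ℝ) := by
        exact_mod_cast congrArg (fun u : ℤ => (u : ℝ)) (Int.toNat_of_nonneg htpos)
      rw [show (∑ i ∈ Finset.range m2.toNat,
            Gdef sgn ((m2 : ℝ) / 2) τ z₁ z₂ (((s2 : ℝ) / 2 + 1 / 2) + (t : ℝ) + (i : ℕ)))
          = ∑ i ∈ Finset.range m2.toNat,
            Gdef sgn ((m2 : ℝ) / 2) τ z₁ z₂ (((s2 : ℝ) / 2 + 1 / 2) + ((t.toNat : ℕ) : ℝ) + (i : ℕ)) from by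
          apply Finset.sum_congr rfl; intro i _; rw [htnn], hwin, htsum_extra]
      ring
    · have htsum_extra : ∑' k : ℤ, extraterm sgn ((m2 : ℝ) / 2) ((s2 : ℝ) / 2 + 1 / 2) t τ z₁ z₂ k
          = ∑ l ∈ Finset.range (-t).toNat,
              Ddef sgn ((m2 : ℝ) / 2) τ z₁ z₂ (((s2 : ℝ) / 2 + 1 / 2) + (t : ℝ) + (l : ℕ)) := by
        rw [tsum_congr (fun k =>
            extraterm_eq_neg sgn ((m2 : ℝ) / 2) ((s2 : ℝ) / 2 + 1 / 2) hmne htneg τ z₁ z₂ hz1 k),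
          Summable.tsum_finsetSum (fun l _ => (hsum_theta _).mul_left _)]
        apply Finset.sum_congr rfl
        intro l _
        rw [tsum_mul_left, Ddef, ThetaS_eq]
      have hwin := window_shift (Gdef sgn ((m2 : ℝ) / 2) τ z₁ z₂)
        (Ddef sgn ((m2 : ℝ) / 2) τ z₁ z₂) m2.toNat hstep (-t).toNat
        (((s2 : ℝ) / 2 + 1 / 2) + (t : ℝ))
      have htun : (t : ℝ) + (((-t).toNat : ℕ) : ℝ) = 0 := by
        have h := congrArg (fun u : ℤ => (u : ℝ)) (Int.toNat_of_nonneg (by omega : (0:ℤ) ≤ -t))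
        push_cast at h ⊢
        linarith
      rw [show (∑ i ∈ Finset.range m2.toNat,
            Gdef sgn ((m2 : ℝ) / 2) τ z₁ z₂
              ((((s2 : ℝ) / 2 + 1 / 2) + (t : ℝ)) + (((-t).toNat : ℕ) : ℝ) + (i : ℕ)))
          = ∑ i ∈ Finset.range m2.toNat,
            Gdef sgn ((m2 : ℝ) / 2) τ z₁ z₂ (((s2 : ℝ) / 2 + 1 / 2) + (i : ℕ)) from by
          apply Finset.sum_congr rfl; intro i _; congr 1; linarith [htun]] at hwin
      rw [htsum_extra]
      linear_combination (sgn ^ a * mexp (-((m2 : ℂ) / 2) * ((b : ℂ) * z₁ + (a : ℂ) * z₂)) *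
            mexp (τ * (-((m2 : ℂ) / 2 * a * b)))) * (1/2 : ℂ) * hwin

  · rw [PhiTilde, PhiTilde,
      phi_real_shift hsgn ((m2 : ℝ) / 2) ((s2 : ℝ) / 2) m2 hm2ne rfl a b hodd1 τ z₁ z₂]
    have hAdd : PhiAddS sgn ((m2 : ℝ) / 2) ((s2 : ℝ) / 2) τ (z₁ + (a : ℂ)) (z₂ + (b : ℂ))
        = mexp ((((s2 : ℝ) / 2 * a : ℝ)) : ℂ)
          * PhiAddS (-sgn) ((m2 : ℝ) / 2) ((s2 : ℝ) / 2) τ z₁ z₂ := by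
      rw [PhiAddS, PhiAddS, Finset.mul_sum]
      apply Finset.sum_congr rfl
      intro i _
      rw [show (z₁ + (a : ℂ) - (z₂ + (b : ℂ))) / 2
          = (z₁ - z₂) / 2 + ((a - b : ℤ) : ℂ) / 2 from by push_cast; ring,
        show z₁ + (a : ℂ) + (z₂ + (b : ℂ)) = (z₁ + z₂) + ((a + b : ℤ) : ℂ) from by
          push_cast; ring,
        RS_real_shift hsgn ((s2 : ℝ) / 2 + i) ((m2 : ℝ) / 2) m2 hm2ne rfl (a - b) hodd2 τ _,
        theta_real_shift hsgn ((s2 : ℝ) / 2 + i) ((m2 : ℝ) / 2) m2 hm2ne rfl (a + b) hodd1 τ _]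
      have key : mexp (((((s2 : ℝ) / 2 + i) * ((a - b : ℤ) : ℝ) / 2 : ℝ)) : ℂ)
            * mexp (((((s2 : ℝ) / 2 + i) * ((a + b : ℤ) : ℝ) / 2 : ℝ)) : ℂ)
          = mexp ((((s2 : ℝ) / 2 * a : ℝ)) : ℂ) := by
        rw [← mexp_add,
          show ((((((s2 : ℝ) / 2 + i) * ((a - b : ℤ) : ℝ) / 2 : ℝ)) : ℂ)
              + ((((s2 : ℝ) / 2 + i) * ((a + b : ℤ) : ℝ) / 2 : ℝ) : ℂ))
            = (((s2 : ℝ) / 2 * a : ℝ) : ℂ) + ((i * a : ℤ) : ℂ) from by push_cast; ring,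
          mexp_add, mexp_intCast, mul_one]
      linear_combination (RS (-sgn) ((s2 : ℝ) / 2 + i) ((m2 : ℝ) / 2) τ ((z₁ - z₂) / 2)
        * ThetaS (-sgn) ((s2 : ℝ) / 2 + i) ((m2 : ℝ) / 2) τ (z₁ + z₂)) * key
    rw [hAdd]
    rw [show ((((s2 : ℝ) / 2 * a : ℝ)) : ℂ) = (s2 : ℂ) / 2 * a from by push_cast; ring]
    ring
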